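/- Let A be a prime associative superalgebra over a commutative unital ring Φ with 1/2 ∈ Φ, let L be a Lie ideal of A that is dense in A, and let v be a homogeneous element of A such that vLv = 0. Then v = 0. -/

import Mathlib

/-! Basic notions for associative superalgebras (ℤ/2-graded algebras). -/

variable {Φ A : Type*} [CommRing Φ] [Ring A] [Algebra Φ A]
variable (𝒜 : ZMod 2 → Submodule Φ A) [GradedAlgebra 𝒜]

/-- The superbracket of elements of degrees `i` and `j`:
`[a,b] = a*b - (-1)^(|a||b|) b*a`. -/
def sbrak (i j : ZMod 2) (a b : A) : A :=
  a * b - ((-1 : ℤ) ^ (i.val * j.val)) • (b * a)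

/-- The bilinear extension of the superbracket to all of `A`, via the
homogeneous components. -/
def superComm (x y : A) : A :=
  ∑ i : ZMod 2, ∑ j : ZMod 2,
    sbrak i j (DirectSum.decompose 𝒜 x i : A) (DirectSum.decompose 𝒜 y j : A)

/-- A graded submodule: one containing all homogeneous components of its
elements. -/
def IsGradedSub (M : Submodule Φ A) : Prop :=
  ∀ (i : ZMod 2), ∀ x ∈ M, (DirectSum.decompose 𝒜 x i : A) ∈ M

/-- A graded two-sided ideal of the superalgebra `A`. -/
def IsGradedIdeal (I : Submodule Φ A) : Prop :=
  IsGradedSub 𝒜 I ∧ ∀ (a : A), ∀ x ∈ I, a * x ∈ I ∧ x * a ∈ I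

/-- `A` is a prime superalgebra: for graded ideals `I, J`, `IJ = 0` implies
`I = 0` or `J = 0`. -/
def SuperPrime : Prop :=
  ∀ I J : Submodule Φ A, IsGradedIdeal 𝒜 I → IsGradedIdeal 𝒜 J →
    (∀ x ∈ I, ∀ y ∈ J, x * y = 0) → I = ⊥ ∨ J = ⊥

/-- `A` is a semiprime superalgebra: for graded ideals `I`, `I² = 0` implies
`I = 0`. -/
def SuperSemiprime : Prop :=
  ∀ I : Submodule Φ A, IsGradedIdeal 𝒜 I →
    (∀ x ∈ I, ∀ y ∈ I, x * y = 0) → I = ⊥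

/-- `A` is a nontrivial superalgebra: its odd part is nonzero. -/
def SuperNontrivial : Prop := 𝒜 1 ≠ ⊥

/-- `Z`: the even part of the center of `A`. -/
def evenCenter : Set A := {z | z ∈ 𝒜 0 ∧ ∀ a : A, a * z = z * a}

/-- A Lie ideal of `A`: a graded submodule `L` with `[L, A] ⊆ L`
(superbracket). -/
def IsSuperLieIdeal (L : Submodule Φ A) : Prop :=
  IsGradedSub 𝒜 L ∧ ∀ l ∈ L, ∀ a : A, superComm 𝒜 l a ∈ L

/-- A graded subalgebra of `A`: a graded submodule closed under
multiplication. -/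
def IsGradedSubalg (W : Submodule Φ A) : Prop :=
  IsGradedSub 𝒜 W ∧ ∀ x ∈ W, ∀ y ∈ W, x * y ∈ W

/-- A submodule `M` is dense in `A` if the (non-unital) subalgebra generated
by `M` contains a nonzero graded ideal of `A`. -/
def SuperDense (M : Submodule Φ A) : Prop :=
  ∃ I : Submodule Φ A, IsGradedIdeal 𝒜 I ∧ I ≠ ⊥ ∧
    ∀ x ∈ I, x ∈ NonUnitalAlgebra.adjoin Φ (M : Set A)

/-- Witness that `A` is a central order in the Clifford superalgebra of a
nondegenerate quadratic space of dimension `n` over the field `Z⁻¹Z`: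
an embedding `f` of `A` into such a Clifford superalgebra, preserving the
grading, inverting the nonzero elements of `Z`, and such that every element of
the Clifford superalgebra (resp. of its base field) is a fraction of elements
of `A` (resp. of `Z`) over `Z`. -/
structure CentralOrderInCliffWitness (n : ℕ) : Type _ where
  K : Type
  [fieldK : Field K]
  V : Type
  [acgV : AddCommGroup V]
  [modV : Module K V]
  Q : QuadraticForm K V
  dim : Module.finrank K V = n
  nondeg : LinearMap.BilinForm.Nondegenerate (QuadraticMap.polarBilin Q)
  f : A →+* CliffordAlgebra Q
  inj : Function.Injective f
  graded : ∀ i : ZMod 2, ∀ x ∈ 𝒜 i, f x ∈ CliffordAlgebra.evenOdd Q i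
  unitZ : ∀ z ∈ evenCenter 𝒜, z ≠ 0 → IsUnit (f z)
  centralZ : ∀ z ∈ evenCenter 𝒜, ∀ c : CliffordAlgebra Q, c * f z = f z * c
  fracSurj : ∀ (i : ZMod 2), ∀ c ∈ CliffordAlgebra.evenOdd Q i,
    ∃ z ∈ evenCenter 𝒜, z ≠ 0 ∧ ∃ a ∈ 𝒜 i, f z * c = f a
  baseField : ∀ k : K, ∃ z ∈ evenCenter 𝒜, z ≠ 0 ∧ ∃ w ∈ evenCenter 𝒜,
    algebraMap K (CliffordAlgebra Q) k * f z = f w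

/-- `A` is a central order in `C(n)`. -/
def IsCentralOrderInCliff (n : ℕ) : Prop :=
  (∃ z ∈ evenCenter 𝒜, z ≠ 0) ∧ Nonempty (CentralOrderInCliffWitness 𝒜 n)


/-! ### Auxiliary machinery for the proof -/

section AuxVLV

open DirectSum Submodule

/-- The `k`-th homogeneous projection, as an additive monoid hom. -/
noncomputable def projA (k : ZMod 2) : A →+ A where
  toFun x := (DirectSum.decompose 𝒜 x k : A)
  map_zero' := by simp
  map_add' x y := by simp [DirectSum.decompose_add]

lemma projA_apply (k : ZMod 2) (x : A) :
    projA 𝒜 k x = (DirectSum.decompose 𝒜 x k : A) := rfl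

lemma sum_decompose (x : A) :
    ∑ k : ZMod 2, (DirectSum.decompose 𝒜 x k : A) = x := by
  induction x using DirectSum.Decomposition.inductionOn 𝒜 with
  | zero => simp
  | @homogeneous q m =>
    rw [Finset.sum_eq_single q]
    · exact DirectSum.decompose_of_mem_same 𝒜 m.2
    · intro b _ hb
      exact DirectSum.decompose_of_mem_ne 𝒜 m.2 (Ne.symm hb)
    · intro h; exact absurd (Finset.mem_univ q) h
  | add a b ha hb =>
    simp only [DirectSum.decompose_add, DirectSum.add_apply, Submodule.coe_add,
      Finset.sum_add_distrib, ha, hb]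

lemma decompose_mul_left {p : ZMod 2} {x : A} (hx : x ∈ 𝒜 p) (a : A) (k : ZMod 2) :
    (DirectSum.decompose 𝒜 (x * a) k : A) = x * (DirectSum.decompose 𝒜 a (k - p) : A) := by
  induction a using DirectSum.Decomposition.inductionOn 𝒜 with
  | zero => simp
  | @homogeneous q m =>
    by_cases h : k = p + q
    · subst h
      rw [DirectSum.decompose_of_mem_same 𝒜 (SetLike.mul_mem_graded hx m.2)]
      rw [show p + q - p = q by ring, DirectSum.decompose_of_mem_same 𝒜 m.2]
    · rw [DirectSum.decompose_of_mem_ne 𝒜 (SetLike.mul_mem_graded hx m.2)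
        (fun hh => h hh.symm)]
      rw [DirectSum.decompose_of_mem_ne 𝒜 m.2 (fun hq => h (by rw [hq]; ring)),
        mul_zero]
  | add a b ha hb =>
    simp only [mul_add, DirectSum.decompose_add, DirectSum.add_apply, Submodule.coe_add,
      ha, hb]

lemma decompose_mul_right {p : ZMod 2} {x : A} (hx : x ∈ 𝒜 p) (a : A) (k : ZMod 2) :
    (DirectSum.decompose 𝒜 (a * x) k : A) = (DirectSum.decompose 𝒜 a (k - p) : A) * x := by
  induction a using DirectSum.Decomposition.inductionOn 𝒜 with
  | zero => simp
  | @homogeneous q m =>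
    by_cases h : k = q + p
    · subst h
      rw [DirectSum.decompose_of_mem_same 𝒜 (SetLike.mul_mem_graded m.2 hx)]
      rw [show q + p - p = q by ring, DirectSum.decompose_of_mem_same 𝒜 m.2]
    · rw [DirectSum.decompose_of_mem_ne 𝒜 (SetLike.mul_mem_graded m.2 hx)
        (fun hh => h hh.symm)]
      rw [DirectSum.decompose_of_mem_ne 𝒜 m.2 (fun hq => h (by rw [hq]; ring)),
        zero_mul]
  | add a b ha hb =>
    simp only [add_mul, DirectSum.decompose_add, DirectSum.add_apply, Submodule.coe_add,
      ha, hb]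

lemma negpow_mul_self (n : ℕ) : ((-1 : ℤ) ^ n) * ((-1 : ℤ) ^ n) = 1 := by
  rw [← pow_add]
  exact Even.neg_one_pow ⟨n, rfl⟩

lemma sign_combine : ∀ p₁ p₂ q : ZMod 2,
    ((-1 : ℤ) ^ (p₁.val * (p₂ + q).val)) * ((-1 : ℤ) ^ (p₂.val * ((q + p₁).val)))
      = (-1 : ℤ) ^ (((p₁ + p₂) : ZMod 2).val * q.val) := by
  decide

variable {𝒜}
variable {L : Submodule Φ A} {v : A} {i : ZMod 2}

/-- Master expansion: sandwiching `l*b` between `v`'s. -/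
lemma sandwich (hL : IsSuperLieIdeal 𝒜 L) (hvLv : ∀ l ∈ L, v * l * v = 0)
    {l : A} (hl : l ∈ L) (b : A) :
    v * (l * b) * v = ∑ p : ZMod 2, ∑ q : ZMod 2, ((-1 : ℤ) ^ (p.val * q.val)) •
      (v * ((DirectSum.decompose 𝒜 b q : A) * (DirectSum.decompose 𝒜 l p : A)) * v) := by
  have h0 : v * superComm 𝒜 l b * v = 0 := hvLv _ (hL.2 l hl b)
  have hexp : superComm 𝒜 l b = l * b - ∑ p : ZMod 2, ∑ q : ZMod 2,
      ((-1 : ℤ) ^ (p.val * q.val)) •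
        ((DirectSum.decompose 𝒜 b q : A) * (DirectSum.decompose 𝒜 l p : A)) := by
    unfold superComm sbrak
    simp only [Finset.sum_sub_distrib]
    congr 1
    rw [← Finset.sum_mul_sum, sum_decompose, sum_decompose]
  rw [hexp, mul_sub, sub_mul] at h0
  rw [sub_eq_zero] at h0
  rw [h0]
  simp only [Finset.mul_sum, Finset.sum_mul, mul_smul_comm, smul_mul_assoc]

/-- Super-swap for a homogeneous element of `L` against a homogeneous element. -/
lemma swap_vLv (hL : IsSuperLieIdeal 𝒜 L) (hvLv : ∀ l ∈ L, v * l * v = 0)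
    {x : A} (hx : x ∈ L) {p : ZMod 2} (hxp : x ∈ 𝒜 p) {b : A} {q : ZMod 2} (hb : b ∈ 𝒜 q) :
    v * (x * b) * v = ((-1 : ℤ) ^ (p.val * q.val)) • (v * (b * x) * v) := by
  rw [sandwich hL hvLv hx b]
  rw [Finset.sum_eq_single p]
  · rw [Finset.sum_eq_single q]
    · rw [DirectSum.decompose_of_mem_same 𝒜 hxp, DirectSum.decompose_of_mem_same 𝒜 hb]
    · intro q' _ hq'
      rw [DirectSum.decompose_of_mem_ne 𝒜 hb (Ne.symm hq')]
      simp
    · intro h; exact absurd (Finset.mem_univ q) h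
  · intro p' _ hp'
    apply Finset.sum_eq_zero; intro q' _
    rw [DirectSum.decompose_of_mem_ne 𝒜 hxp (Ne.symm hp')]
    simp
  · intro h; exact absurd (Finset.mem_univ p) h

lemma swap_vLv' (hL : IsSuperLieIdeal 𝒜 L) (hvLv : ∀ l ∈ L, v * l * v = 0)
    {x : A} (hx : x ∈ L) {p : ZMod 2} (hxp : x ∈ 𝒜 p) {b : A} {q : ZMod 2} (hb : b ∈ 𝒜 q) :
    v * (b * x) * v = ((-1 : ℤ) ^ (p.val * q.val)) • (v * (x * b) * v) := by
  rw [swap_vLv hL hvLv hx hxp hb, smul_smul, negpow_mul_self, one_smul]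

/-- `v * l * Y * v * v = 0` for every `l ∈ L`. -/
lemma key1 (hL : IsSuperLieIdeal 𝒜 L) (hv : v ∈ 𝒜 i) (hvLv : ∀ l ∈ L, v * l * v = 0)
    {l : A} (hl : l ∈ L) (Y : A) :
    v * (l * (Y * v)) * v = 0 := by
  rw [sandwich hL hvLv hl (Y * v)]
  apply Finset.sum_eq_zero; intro p _
  apply Finset.sum_eq_zero; intro q _
  rw [decompose_mul_right 𝒜 hv Y q]
  have hz : v * (DirectSum.decompose 𝒜 l p : A) * v = 0 := hvLv _ (hL.1 p l hl)
  have e : v * ((DirectSum.decompose 𝒜 Y (q - i) : A) * v * (DirectSum.decompose 𝒜 l p : A)) * v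
      = v * (DirectSum.decompose 𝒜 Y (q - i) : A) * (v * (DirectSum.decompose 𝒜 l p : A) * v) := by
    simp only [mul_assoc]
  rw [e, hz, mul_zero, smul_zero]

/-- `v * a * v * s * v = 0` for homogeneous `s ∈ L`. -/
lemma fbase (hL : IsSuperLieIdeal 𝒜 L) (hv : v ∈ 𝒜 i) (hvLv : ∀ l ∈ L, v * l * v = 0)
    {s : A} (hs : s ∈ L) {p : ZMod 2} (hsp : s ∈ 𝒜 p) (a : A) :
    v * a * v * s * v = 0 := by
  have e : v * a * v * s * v = v * ((a * v) * s) * v := by simp only [mul_assoc]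
  rw [e]
  conv_lhs => rw [← sum_decompose 𝒜 (a * v)]
  rw [Finset.sum_mul, Finset.mul_sum, Finset.sum_mul]
  apply Finset.sum_eq_zero; intro q _
  rw [swap_vLv' hL hvLv hs hsp (SetLike.coe_mem _)]
  rw [decompose_mul_right 𝒜 hv a q]
  rw [key1 hL hv hvLv hs _, smul_zero]

end AuxVLV

section AuxVLV2

open DirectSum Submodule

variable {𝒜}
variable {L : Submodule Φ A} {v : A} {i : ZMod 2}

/-- Main induction over the multiplicative closure of homogeneous elements of `L`. -/
lemma closure_main (hL : IsSuperLieIdeal 𝒜 L) (hv : v ∈ 𝒜 i)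
    (hvLv : ∀ l ∈ L, v * l * v = 0) :
    ∀ x ∈ Subsemigroup.closure {y : A | (∃ p : ZMod 2, y ∈ 𝒜 p) ∧ y ∈ L},
      (∃ p : ZMod 2, x ∈ 𝒜 p ∧ ∀ (q : ZMod 2) (b : A), b ∈ 𝒜 q →
          v * (x * b) * v = ((-1 : ℤ) ^ (p.val * q.val)) • (v * (b * x) * v)) ∧
      (∀ a : A, v * x * v * a * v = 0) ∧ (∀ a : A, v * a * v * x * v = 0) := by
  intro x hx
  induction hx using Subsemigroup.closure_induction with
  | mem y hy =>
    obtain ⟨⟨p, hyp⟩, hyL⟩ := hy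
    refine ⟨⟨p, hyp, fun q b hb => swap_vLv hL hvLv hyL hyp hb⟩, ?_,
      fun a => fbase hL hv hvLv hyL hyp a⟩
    intro a
    rw [hvLv y hyL, zero_mul, zero_mul]
  | mul x y hxc hyc px py =>
    obtain ⟨⟨p₁, hx1, cycx⟩, Gx, Fx⟩ := px
    obtain ⟨⟨p₂, hy1, cycy⟩, Gy, Fy⟩ := py
    have hxy : x * y ∈ 𝒜 (p₁ + p₂) := SetLike.mul_mem_graded hx1 hy1
    refine ⟨⟨p₁ + p₂, hxy, ?_⟩, ?_, ?_⟩
    · -- cyclic swap for the product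
      intro q b hb
      have h1 : v * ((x * y) * b) * v = v * (x * (y * b)) * v := by simp only [mul_assoc]
      rw [h1, cycx (p₂ + q) (y * b) (SetLike.mul_mem_graded hy1 hb)]
      have h2 : v * ((y * b) * x) * v = v * (y * (b * x)) * v := by simp only [mul_assoc]
      rw [h2, cycy (q + p₁) (b * x) (SetLike.mul_mem_graded hb hx1)]
      rw [smul_smul, sign_combine]
      congr 1
      simp only [mul_assoc]
    · -- G property for the product
      intro a
      have e : v * (x * y) * v * a * v = v * (x * (y * (v * a))) * v := by
        simp only [mul_assoc]
      rw [e]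
      conv_lhs => rw [← sum_decompose 𝒜 (y * (v * a))]
      rw [Finset.mul_sum, Finset.mul_sum, Finset.sum_mul]
      apply Finset.sum_eq_zero; intro q _
      rw [cycx q _ (SetLike.coe_mem _)]
      rw [decompose_mul_left 𝒜 hy1 (v * a) q, decompose_mul_left 𝒜 hv a (q - p₂)]
      have h := Gy ((DirectSum.decompose 𝒜 a (q - p₂ - i) : A) * x)
      have e2 : v * ((y * (v * (DirectSum.decompose 𝒜 a (q - p₂ - i) : A))) * x) * v
          = v * y * v * ((DirectSum.decompose 𝒜 a (q - p₂ - i) : A) * x) * v := by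
        simp only [mul_assoc]
      rw [e2, h, smul_zero]
    · -- F property for the product
      intro a
      have e : v * a * v * (x * y) * v = v * ((a * (v * x)) * y) * v := by
        simp only [mul_assoc]
      rw [e]
      conv_lhs => rw [← sum_decompose 𝒜 (a * (v * x))]
      rw [Finset.sum_mul, Finset.mul_sum, Finset.sum_mul]
      apply Finset.sum_eq_zero; intro q _
      have hb : (DirectSum.decompose 𝒜 (a * (v * x)) q : A) ∈ 𝒜 q := SetLike.coe_mem _
      have hinv : v * ((DirectSum.decompose 𝒜 (a * (v * x)) q : A) * y) * v
          = ((-1 : ℤ) ^ (p₂.val * q.val)) •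
            (v * (y * (DirectSum.decompose 𝒜 (a * (v * x)) q : A)) * v) := by
        rw [cycy q _ hb, smul_smul, negpow_mul_self, one_smul]
      rw [hinv]
      rw [decompose_mul_right 𝒜 (SetLike.mul_mem_graded hv hx1) a q]
      have h := Fx (y * (DirectSum.decompose 𝒜 a (q - (i + p₁)) : A))
      have e2 : v * (y * ((DirectSum.decompose 𝒜 a (q - (i + p₁)) : A) * (v * x))) * v
          = v * (y * (DirectSum.decompose 𝒜 a (q - (i + p₁)) : A)) * v * x * v := by
        simp only [mul_assoc]
      rw [e2, h, smul_zero]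

lemma span_mul_mem_span {T : Subsemigroup A} {x y : A}
    (hx : x ∈ Submodule.span Φ (T : Set A)) (hy : y ∈ Submodule.span Φ (T : Set A)) :
    x * y ∈ Submodule.span Φ (T : Set A) := by
  induction hx using Submodule.span_induction with
  | mem a ha =>
    induction hy using Submodule.span_induction with
    | mem b hb => exact Submodule.subset_span (T.mul_mem ha hb)
    | zero => rw [mul_zero]; exact zero_mem _
    | add b c _ _ hb hc => rw [mul_add]; exact add_mem hb hc
    | smul r b _ hb => rw [mul_smul_comm]; exact Submodule.smul_mem _ _ hb
  | zero => rw [zero_mul]; exact zero_mem _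
  | add a b _ _ ha hb => rw [add_mul]; exact add_mem ha hb
  | smul r a _ ha => rw [smul_mul_assoc]; exact Submodule.smul_mem _ _ ha

lemma adjoin_le_span_closure (hL : IsSuperLieIdeal 𝒜 L) :
    ∀ x ∈ NonUnitalAlgebra.adjoin Φ (L : Set A),
      x ∈ Submodule.span Φ
        ((Subsemigroup.closure {y : A | (∃ p : ZMod 2, y ∈ 𝒜 p) ∧ y ∈ L} :
          Subsemigroup A) : Set A) := by
  intro x hx
  have h1 : x ∈ Submodule.span Φ ((Subsemigroup.closure (L : Set A)) : Set A) := by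
    rw [← NonUnitalAlgebra.adjoin_eq_span]; exact hx
  refine Submodule.span_le.mpr ?_ h1
  intro z hz
  simp only [SetLike.mem_coe] at hz
  induction hz using Subsemigroup.closure_induction with
  | mem l hl =>
    have e : l = ∑ k : ZMod 2, (DirectSum.decompose 𝒜 l k : A) := (sum_decompose 𝒜 l).symm
    rw [SetLike.mem_coe, e]
    apply Submodule.sum_mem
    intro k _
    exact Submodule.subset_span
      (Subsemigroup.subset_closure ⟨⟨k, SetLike.coe_mem _⟩, hL.1 k l hl⟩)
  | mul a b _ _ ha hb =>
    rw [SetLike.mem_coe] at ha hb ⊢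
    exact span_mul_mem_span ha hb

lemma span_mul_eq_zero {S T : Set A} (h : ∀ s ∈ S, ∀ t ∈ T, s * t = 0) :
    ∀ x ∈ Submodule.span Φ S, ∀ y ∈ Submodule.span Φ T, x * y = 0 := by
  intro x hx
  induction hx using Submodule.span_induction with
  | mem s hs =>
    intro y hy
    induction hy using Submodule.span_induction with
    | mem t ht => exact h s hs t ht
    | zero => rw [mul_zero]
    | add a b _ _ ha hb => rw [mul_add, ha, hb, add_zero]
    | smul r a _ ha => rw [mul_smul_comm, ha, smul_zero]
  | zero => intro y hy; rw [zero_mul]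
  | add a b _ _ ha hb => intro y hy; rw [add_mul, ha y hy, hb y hy, add_zero]
  | smul r a _ ha => intro y hy; rw [smul_mul_assoc, ha y hy, smul_zero]

end AuxVLV2

section AuxVLV3

open DirectSum Submodule

lemma isGradedIdeal_span (S : Set A)
    (hdec : ∀ s ∈ S, ∀ k : ZMod 2, (DirectSum.decompose 𝒜 s k : A) ∈ Submodule.span Φ S)
    (hmul : ∀ s ∈ S, ∀ a : A, a * s ∈ Submodule.span Φ S ∧ s * a ∈ Submodule.span Φ S) :
    IsGradedIdeal 𝒜 (Submodule.span Φ S) := by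
  constructor
  · intro k x hx
    induction hx using Submodule.span_induction with
    | mem s hs => exact hdec s hs k
    | zero => simp
    | add a b _ _ ha hb =>
      rw [DirectSum.decompose_add]
      simp only [DirectSum.add_apply, Submodule.coe_add]
      exact add_mem ha hb
    | smul r a _ ha =>
      rw [DirectSum.decompose_smul]
      simp only [DirectSum.smul_apply, SetLike.val_smul]
      exact Submodule.smul_mem _ _ ha
  · intro a x hx
    induction hx using Submodule.span_induction with
    | mem s hs => exact hmul s hs a
    | zero => exact ⟨by rw [mul_zero]; exact zero_mem _, by rw [zero_mul]; exact zero_mem _⟩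
    | add b c _ _ hb hc =>
      exact ⟨by rw [mul_add]; exact add_mem hb.1 hc.1,
        by rw [add_mul]; exact add_mem hb.2 hc.2⟩
    | smul r b _ hb =>
      exact ⟨by rw [mul_smul_comm]; exact Submodule.smul_mem _ _ hb.1,
        by rw [smul_mul_assoc]; exact Submodule.smul_mem _ _ hb.2⟩

lemma decompose_sandwich_mem {S : Set A} {c : A} {m : ZMod 2} (hc : c ∈ 𝒜 m)
    (hcS : ∀ a b : A, a * c * b ∈ S) (a b : A) (k : ZMod 2) :
    (DirectSum.decompose 𝒜 (a * c * b) k : A) ∈ Submodule.span Φ S := by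
  have e : a * c * b = ∑ p : ZMod 2, ∑ q : ZMod 2,
      (DirectSum.decompose 𝒜 a p : A) * c * (DirectSum.decompose 𝒜 b q : A) := by
    conv_lhs => rw [← sum_decompose 𝒜 a, ← sum_decompose 𝒜 b]
    rw [Finset.sum_mul, Finset.sum_mul_sum]
  rw [e, show (DirectSum.decompose 𝒜 (∑ p : ZMod 2, ∑ q : ZMod 2,
      (DirectSum.decompose 𝒜 a p : A) * c * (DirectSum.decompose 𝒜 b q : A)) k : A)
      = projA 𝒜 k (∑ p : ZMod 2, ∑ q : ZMod 2,
      (DirectSum.decompose 𝒜 a p : A) * c * (DirectSum.decompose 𝒜 b q : A)) from rfl,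
    map_sum]
  apply Submodule.sum_mem; intro p _
  rw [map_sum]
  apply Submodule.sum_mem; intro q _
  rw [projA_apply]
  have hmem : (DirectSum.decompose 𝒜 a p : A) * c * (DirectSum.decompose 𝒜 b q : A)
      ∈ 𝒜 (p + m + q) :=
    SetLike.mul_mem_graded (SetLike.mul_mem_graded (SetLike.coe_mem _) hc) (SetLike.coe_mem _)
  by_cases h : p + m + q = k
  · rw [← h, DirectSum.decompose_of_mem_same 𝒜 hmem]
    exact Submodule.subset_span (hcS _ _)
  · rw [DirectSum.decompose_of_mem_ne 𝒜 hmem h]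
    exact zero_mem _

end AuxVLV3

/-- Let `A` be a prime associative superalgebra over `Φ` with `1/2 ∈ Φ`, `L` a
Lie ideal of `A` that is dense in `A`, and `v` a homogeneous element of `A`
such that `vLv = 0`. Then `v = 0`. -/
theorem eq_zero_of_vLv_eq_zero
    (h2 : IsUnit (2 : Φ)) (hp : SuperPrime 𝒜)
    (L : Submodule Φ A) (hL : IsSuperLieIdeal 𝒜 L) (hdense : SuperDense 𝒜 L)
    (v : A) (i : ZMod 2) (hv : v ∈ 𝒜 i)
    (hvLv : ∀ l ∈ L, v * l * v = 0) :
    v = 0 := by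
  classical
  obtain ⟨I, hI, hIne, hIadj⟩ := hdense
  -- `v * x * v * a * v = 0` for every `x` in the subalgebra generated by `L`
  have hGspan : ∀ x ∈ Submodule.span Φ
      ((Subsemigroup.closure {y : A | (∃ p : ZMod 2, y ∈ 𝒜 p) ∧ y ∈ L} :
        Subsemigroup A) : Set A),
      ∀ a : A, v * x * v * a * v = 0 := by
    intro x hx
    induction hx using Submodule.span_induction with
    | mem z hz => exact (closure_main hL hv hvLv z hz).2.1
    | zero => intro a; simp
    | add y z _ _ hy hz =>
      intro a
      have e : v * (y + z) * v * a * v = v * y * v * a * v + v * z * v * a * v := by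
        noncomm_ring
      rw [e, hy a, hz a, add_zero]
    | smul r y _ hy =>
      intro a
      have e : v * (r • y) * v * a * v = r • (v * y * v * a * v) := by
        simp only [mul_smul_comm, smul_mul_assoc]
      rw [e, hy a, smul_zero]
  have hG : ∀ x ∈ I, ∀ a : A, v * x * v * a * v = 0 := fun x hx =>
    hGspan x (adjoin_le_span_closure hL x (hIadj x hx))
  -- the graded ideal generated by `v`
  set SV : Set A := {w : A | ∃ a b : A, w = a * v * b} with hSVdef
  have hJv : IsGradedIdeal 𝒜 (Submodule.span Φ SV) := by
    apply isGradedIdeal_span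
    · rintro s ⟨a, b, rfl⟩ k
      exact decompose_sandwich_mem (S := SV) 𝒜 hv (fun a b => ⟨a, b, rfl⟩) a b k
    · rintro s ⟨a, b, rfl⟩ c
      exact ⟨Submodule.subset_span ⟨c * a, b, by simp only [mul_assoc]⟩,
        Submodule.subset_span ⟨a, b * c, by simp only [mul_assoc]⟩⟩
  have hvmem : v ∈ Submodule.span Φ SV := Submodule.subset_span ⟨1, 1, by simp⟩
  -- the graded ideal generated by `v * I * v`
  set S1 : Set A := {w : A | ∃ x, x ∈ I ∧ ∃ a b : A, w = a * (v * x * v) * b} with hS1def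
  have hQ1 : IsGradedIdeal 𝒜 (Submodule.span Φ S1) := by
    apply isGradedIdeal_span
    · rintro s ⟨x, hx, a, b, rfl⟩ k
      have e : a * (v * x * v) * b = ∑ r : ZMod 2,
          a * (v * (DirectSum.decompose 𝒜 x r : A) * v) * b := by
        conv_lhs => rw [← sum_decompose 𝒜 x]
        simp only [Finset.mul_sum, Finset.sum_mul]
      rw [e, show (DirectSum.decompose 𝒜 (∑ r : ZMod 2,
          a * (v * (DirectSum.decompose 𝒜 x r : A) * v) * b) k : A)
          = projA 𝒜 k (∑ r : ZMod 2,
          a * (v * (DirectSum.decompose 𝒜 x r : A) * v) * b) from rfl, map_sum]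
      apply Submodule.sum_mem; intro r _
      rw [projA_apply]
      exact decompose_sandwich_mem (S := S1) 𝒜
        (SetLike.mul_mem_graded (SetLike.mul_mem_graded hv (SetLike.coe_mem _)) hv)
        (fun a b => ⟨(DirectSum.decompose 𝒜 x r : A), hI.1 r x hx, a, b, rfl⟩) a b k
    · rintro s ⟨x, hx, a, b, rfl⟩ c
      exact ⟨Submodule.subset_span ⟨x, hx, c * a, b, by simp only [mul_assoc]⟩,
        Submodule.subset_span ⟨x, hx, a, b * c, by simp only [mul_assoc]⟩⟩
  have hz1 : ∀ p ∈ Submodule.span Φ S1, ∀ q ∈ Submodule.span Φ SV, p * q = 0 := by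
    apply span_mul_eq_zero
    rintro s ⟨x, hx, a, b, rfl⟩ t ⟨c, d, rfl⟩
    have key : a * (v * x * v) * b * (c * v * d) = a * (v * x * v * (b * c) * v) * d := by
      simp only [mul_assoc]
    rw [key, hG x hx (b * c), mul_zero, zero_mul]
  rcases hp _ _ hQ1 hJv hz1 with h1 | h1
  · -- `v * I * v = 0`
    have hvxv : ∀ x ∈ I, v * x * v = 0 := by
      intro x hx
      have hm : v * x * v ∈ Submodule.span Φ S1 :=
        Submodule.subset_span ⟨x, hx, 1, 1, by simp⟩
      rw [h1, Submodule.mem_bot] at hm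
      exact hm
    -- the graded ideal generated by `I * v`
    set S2 : Set A := {w : A | ∃ x, x ∈ I ∧ ∃ a b : A, w = a * (x * v) * b} with hS2def
    have hQ2 : IsGradedIdeal 𝒜 (Submodule.span Φ S2) := by
      apply isGradedIdeal_span
      · rintro s ⟨x, hx, a, b, rfl⟩ k
        have e : a * (x * v) * b = ∑ r : ZMod 2,
            a * ((DirectSum.decompose 𝒜 x r : A) * v) * b := by
          conv_lhs => rw [← sum_decompose 𝒜 x]
          simp only [Finset.mul_sum, Finset.sum_mul]
        rw [e, show (DirectSum.decompose 𝒜 (∑ r : ZMod 2,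
            a * ((DirectSum.decompose 𝒜 x r : A) * v) * b) k : A)
            = projA 𝒜 k (∑ r : ZMod 2,
            a * ((DirectSum.decompose 𝒜 x r : A) * v) * b) from rfl, map_sum]
        apply Submodule.sum_mem; intro r _
        rw [projA_apply]
        exact decompose_sandwich_mem (S := S2) 𝒜
          (SetLike.mul_mem_graded (SetLike.coe_mem _) hv)
          (fun a b => ⟨(DirectSum.decompose 𝒜 x r : A), hI.1 r x hx, a, b, rfl⟩) a b k
      · rintro s ⟨x, hx, a, b, rfl⟩ c
        exact ⟨Submodule.subset_span ⟨x, hx, c * a, b, by simp only [mul_assoc]⟩,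
          Submodule.subset_span ⟨x, hx, a, b * c, by simp only [mul_assoc]⟩⟩
    have hz2 : ∀ p ∈ Submodule.span Φ SV, ∀ q ∈ Submodule.span Φ S2, p * q = 0 := by
      apply span_mul_eq_zero
      rintro s ⟨a, b, rfl⟩ t ⟨x, hx, c, d, rfl⟩
      have hbcx : b * c * x ∈ I := (hI.2 (b * c) x hx).1
      have key : a * v * b * (c * (x * v) * d) = a * (v * (b * c * x) * v) * d := by
        simp only [mul_assoc]
      rw [key, hvxv _ hbcx, mul_zero, zero_mul]
    rcases hp _ _ hJv hQ2 hz2 with h2 | h2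
    · rw [h2, Submodule.mem_bot] at hvmem; exact hvmem
    · -- `I * v = 0`
      have hxv : ∀ x ∈ I, x * v = 0 := by
        intro x hx
        have hm : x * v ∈ Submodule.span Φ S2 :=
          Submodule.subset_span ⟨x, hx, 1, 1, by simp⟩
        rw [h2, Submodule.mem_bot] at hm
        exact hm
      have hz3 : ∀ p ∈ I, ∀ q ∈ Submodule.span Φ SV, p * q = 0 := by
        have h' : ∀ p ∈ Submodule.span Φ (I : Set A), ∀ q ∈ Submodule.span Φ SV,
            p * q = 0 := by
          apply span_mul_eq_zero
          rintro s hs t ⟨a, b, rfl⟩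
          have hsa : s * a ∈ I := (hI.2 a s hs).2
          have key : s * (a * v * b) = s * a * v * b := by simp only [mul_assoc]
          rw [key, show s * a * v * b = (s * a * v) * b from rfl, hxv _ hsa, zero_mul]
        intro x hx
        exact h' x (by rw [Submodule.span_eq]; exact hx)
      rcases hp I _ hI hJv hz3 with h3 | h3
      · exact absurd h3 hIne
      · rw [h3, Submodule.mem_bot] at hvmem; exact hvmem
  · rw [h1, Submodule.mem_bot] at hvmem; exact hvmem
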